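/- Let ML be a normal modal logic containing the axiom schemes D: □A → ¬□¬A and 4: □A → □□A, extended by a fixed point constant δ and the axiom δ ↔ ¬□δ. Then the resulting system is inconsistent. -/
import Mathlib


/-- Modal formulas, with a distinguished propositional constant `δ`
(the fixed point constant). -/
inductive Fm : Type
  | atom : ℕ → Fm
  | delta : Fm
  | bot : Fm
  | imp : Fm → Fm → Fm
  | box : Fm → Fm

namespace Fm

def neg (A : Fm) : Fm := imp A bot
def conj (A B : Fm) : Fm := neg (imp A (neg B))
def iff' (A B : Fm) : Fm := conj (imp A B) (imp B A)

end Fm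

open Fm

/-- The Believer Paradox in modal logic: any normal modal logic containing the
axiom schemes D: `□A → ¬□¬A` and 4: `□A → □□A`, extended by the fixed point axiom `δ ↔ ¬□δ`,
is inconsistent. -/
theorem modal_fixed_point_D4_inconsistent
    (Prov : Fm → Prop)
    (ax1 : ∀ A B, Prov (imp A (imp B A)))
    (ax2 : ∀ A B C, Prov (imp (imp A (imp B C)) (imp (imp A B) (imp A C))))
    (ax3 : ∀ A B, Prov (imp (imp (neg A) (neg B)) (imp B A)))
    (axK : ∀ A B, Prov (imp (box (imp A B)) (imp (box A) (box B))))
    (mp : ∀ A B, Prov (imp A B) → Prov A → Prov B)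
    (nec : ∀ A, Prov A → Prov (box A))
    (axD : ∀ A, Prov (imp (box A) (neg (box (neg A)))))
    (ax4 : ∀ A, Prov (imp (box A) (box (box A))))
    (fp : Prov (iff' delta (neg (box delta)))) :
    Prov bot := by
  -- identity
  have pid : ∀ A, Prov (imp A A) := fun A =>
    mp _ _ (mp _ _ (ax2 A (imp A A) A) (ax1 A (imp A A))) (ax1 A A)
  -- hypothetical syllogism (meta)
  have syl : ∀ A B C, Prov (imp A B) → Prov (imp B C) → Prov (imp A C) := by
    intro A B C h1 h2
    exact mp _ _ (mp _ _ (ax2 A B C) (mp _ _ (ax1 (imp B C) A) h2)) h1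
  -- from Prov (A → (B → C)) and Prov B conclude Prov (A → C)
  have mp2 : ∀ A B C, Prov (imp A (imp B C)) → Prov B → Prov (imp A C) := by
    intro A B C h hB
    exact mp _ _ (mp _ _ (ax2 A B C) h) (mp _ _ (ax1 B A) hB)
  -- left composition: Prov (A→B) gives Prov ((B→C)→(A→C))
  have compL : ∀ A B C, Prov (imp A B) → Prov (imp (imp B C) (imp A C)) := by
    intro A B C h
    have s : Prov (imp (imp B C) (imp (imp A B) (imp A C))) :=
      syl _ _ _ (ax1 (imp B C) A) (ax2 A B C)
    exact mp2 _ _ _ s h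
  -- right composition: Prov (B→C) gives Prov ((A→B)→(A→C))
  have compR : ∀ A B C, Prov (imp B C) → Prov (imp (imp A B) (imp A C)) := by
    intro A B C h
    exact mp _ _ (ax2 A B C) (mp _ _ (ax1 (imp B C) A) h)
  -- contraposition (meta)
  have contra : ∀ A B, Prov (imp A B) → Prov (imp (neg B) (neg A)) := by
    intro A B h
    exact compL A B bot h
  -- double negation introduction
  have dni : ∀ A, Prov (imp A (neg (neg A))) := by
    intro A
    have h1 : Prov (imp (imp (neg A) A) (imp (neg A) bot)) :=
      mp _ _ (ax2 (neg A) A bot) (pid (neg A))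
    exact syl _ _ _ (ax1 A (neg A)) h1
  -- double negation elimination
  have dne : ∀ A, Prov (imp (neg (neg A)) A) := by
    intro A
    exact mp _ _ (ax3 A (neg (neg A))) (dni (neg A))
  -- conjunction eliminations
  have conjE1 : ∀ A B, Prov (conj A B) → Prov A := by
    intro A B h
    have L1 : Prov (imp (neg A) (imp A (neg B))) :=
      compR A bot (neg B) (ax1 bot B)
    have c : Prov (imp (neg (imp A (neg B))) (neg (neg A))) := contra _ _ L1
    exact mp _ _ (syl _ _ _ c (dne A)) h
  have conjE2 : ∀ A B, Prov (conj A B) → Prov B := by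
    intro A B h
    have L2 : Prov (imp (neg B) (imp A (neg B))) := ax1 (neg B) A
    have c : Prov (imp (neg (imp A (neg B))) (neg (neg B))) := contra _ _ L2
    exact mp _ _ (syl _ _ _ c (dne B)) h
  -- the fixed point directions
  have h1 : Prov (imp delta (neg (box delta))) := conjE1 _ _ fp
  have h2 : Prov (imp (neg (box delta)) delta) := conjE2 _ _ fp
  -- □δ → ¬δ
  have h3 : Prov (imp (box delta) (neg delta)) :=
    syl _ _ _ (dni (box delta)) (contra _ _ h1)
  have h5 : Prov (imp (box (box delta)) (box (neg delta))) :=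
    mp _ _ (axK (box delta) (neg delta)) (nec _ h3)
  have h6 : Prov (imp (box delta) (box (neg delta))) := syl _ _ _ (ax4 delta) h5
  have h7 : Prov (imp (box delta) (neg (box (neg delta)))) := axD delta
  -- combine: □δ → ⊥
  have h9 : Prov (neg (box delta)) :=
    mp _ _ (mp _ _ (ax2 (box delta) (box (neg delta)) bot) h7) h6
  have h10 : Prov delta := mp _ _ h2 h9
  exact mp _ _ h9 (nec _ h10)
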